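/- Let ν be a finite Borel measure on ℝ, let s > 0, and let E ⊂ ℝ be a Borel set such that at ν-almost every point a ∈ E, limsup_{r→0} ν(B(a,r))/r^s = ∞, and suppose the restriction of H^s to E is absolutely continuous with respect to ν. Then H^s(E) = 0. -/

import Mathlib

open MeasureTheory Filter
open scoped ENNReal NNReal

open Set Metric in
/-- Core covering lemma: if at every point of `A` the upper `s`-density of a finite
measure `ν` is infinite, then `μH[s] A = 0`. -/
lemma stmt11_key (ν : Measure ℝ) [IsFiniteMeasure ν] (s : ℝ) (hs : 0 < s) (A : Set ℝ)
    (h : ∀ a ∈ A, Filter.limsup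
        (fun r : ℝ => ν (Metric.closedBall a r) / ENNReal.ofReal (r ^ s))
        (nhdsWithin 0 (Set.Ioi 0)) = ⊤) :
    μH[s] A = 0 := by
  classical
  -- selection of good radii
  have sel : ∀ (t : ℕ) (δ : ℝ), 0 < δ → ∀ a ∈ A, ∃ ρ : ℝ, 0 < ρ ∧ ρ ≤ δ ∧
      (t : ℝ≥0∞) * ENNReal.ofReal (ρ ^ s) ≤ ν (closedBall a ρ) := by
    intro t δ hδ a ha
    by_contra hcon
    push_neg at hcon
    have hev : ∀ᶠ r in nhdsWithin (0:ℝ) (Set.Ioi 0),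
        ν (closedBall a r) / ENNReal.ofReal (r ^ s) ≤ (t : ℝ≥0∞) := by
      filter_upwards [Ioc_mem_nhdsGT_of_mem (Set.left_mem_Ico.2 hδ)] with r hr
      have h1 : 0 < r ^ s := Real.rpow_pos_of_pos hr.1 s
      rw [ENNReal.div_le_iff (ENNReal.ofReal_pos.2 h1).ne' ENNReal.ofReal_ne_top]
      exact (hcon r hr.1 hr.2).le
    have hle : Filter.limsup
        (fun r : ℝ => ν (closedBall a r) / ENNReal.ofReal (r ^ s))
        (nhdsWithin (0:ℝ) (Set.Ioi 0)) ≤ (t : ℝ≥0∞) :=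
      limsup_le_of_le (by isBoundedDefault) hev
    rw [h a ha] at hle
    exact (ENNReal.natCast_lt_top t).not_ge hle
  -- the main estimate, for each `t = n+1`
  have main : ∀ n : ℕ, μH[s] A ≤ ENNReal.ofReal ((8:ℝ) ^ s) * ν Set.univ /
      ((n:ℝ≥0∞) + 1) := by
    intro n
    set t : ℕ := n + 1 with ht
    have htpos : ((t : ℝ≥0∞)) ≠ 0 := by positivity
    have httop : ((t : ℝ≥0∞)) ≠ ⊤ := ENNReal.natCast_ne_top t
    -- for each scale `k`, construct a countable cover by enlarged balls
    have cover : ∀ k : ℕ, ∃ (u : Set ℝ) (ρ : ℝ → ℝ), u.Countable ∧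
        (∀ b ∈ u, 0 < ρ b ∧ ρ b ≤ 1 / (k + 1)) ∧
        (A ⊆ ⋃ b ∈ u, closedBall b (4 * ρ b)) ∧
        (∑' b : u, ν (closedBall b (ρ b)) ≤ ν Set.univ) ∧
        (∀ b ∈ u, (t : ℝ≥0∞) * ENNReal.ofReal (ρ b ^ s) ≤ ν (closedBall b (ρ b))) := by
      intro k
      have hδ : (0:ℝ) < 1 / (k + 1) := by positivity
      have sel' : ∀ a : ℝ, ∃ ρ : ℝ, 0 < ρ ∧ ρ ≤ 1 / (k + 1) ∧
          (a ∈ A → (t : ℝ≥0∞) * ENNReal.ofReal (ρ ^ s) ≤ ν (closedBall a ρ)) := by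
        intro a
        by_cases ha : a ∈ A
        · obtain ⟨ρ, h1, h2, h3⟩ := sel t _ hδ a ha
          exact ⟨ρ, h1, h2, fun _ => h3⟩
        · exact ⟨1 / (k + 1), hδ, le_refl _, fun ha' => absurd ha' ha⟩
      choose ρ hρ0 hρδ hρν using sel'
      obtain ⟨u, huA, u_disj, hcov⟩ :=
        Vitali.exists_disjoint_subfamily_covering_enlargement_closedBall A id ρ (1 / (k + 1))
          (fun a _ => hρδ a) 4 (by norm_num)
      have u_count : u.Countable := u_disj.countable_of_nonempty_interior fun b _ =>
        ⟨b, ball_subset_interior_closedBall (mem_ball_self (hρ0 b))⟩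
      refine ⟨u, ρ, u_count, fun b _ => ⟨hρ0 b, hρδ b⟩, ?_, ?_, fun b hb => hρν b (huA hb)⟩
      · intro a ha
        obtain ⟨b, hb, hsub⟩ := hcov a ha
        exact Set.mem_biUnion hb (hsub (mem_closedBall_self (hρ0 a).le))
      · have u_disj' : u.PairwiseDisjoint fun a => closedBall a (ρ a) := u_disj
        rw [← measure_biUnion u_count u_disj' (fun b _ => measurableSet_closedBall)]
        exact measure_mono (Set.subset_univ _)
    choose u ρ hu_count hρ hcov hsum hν using cover
    haveI : ∀ k : ℕ, Countable ↥(u k) := fun k => (hu_count k).to_subtype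
    -- apply the liminf bound for Hausdorff measure
    have hH := MeasureTheory.Measure.hausdorffMeasure_le_liminf_tsum s A
      (l := atTop) (fun k : ℕ => ENNReal.ofReal (8 / (k + 1)))
      ?_ (fun k (b : u k) => closedBall (b : ℝ) (4 * ρ k b)) ?_ ?_
    · refine hH.trans ?_
      have bound : ∀ k : ℕ,
          (∑' b : u k, EMetric.diam (closedBall (b : ℝ) (4 * ρ k (b : ℝ))) ^ s) ≤
            ENNReal.ofReal ((8:ℝ) ^ s) * ν Set.univ / t := by
        intro k
        have step : ∀ b : u k,
            EMetric.diam (closedBall (b : ℝ) (4 * ρ k (b : ℝ))) ^ s ≤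
              ENNReal.ofReal ((8:ℝ) ^ s) * (ν (closedBall (b : ℝ) (ρ k (b : ℝ))) / t) := by
          intro b
          have hb0 : 0 < ρ k (b : ℝ) := (hρ k b b.2).1
          have hd : EMetric.diam (closedBall (b : ℝ) (4 * ρ k (b : ℝ))) ≤
              ENNReal.ofReal (8 * ρ k (b : ℝ)) := by
            rw [← Metric.emetric_closedBall (by positivity : (0:ℝ) ≤ 4 * _)]
            refine EMetric.diam_closedBall.trans ?_
            rw [← ENNReal.ofReal_ofNat, ← ENNReal.ofReal_mul (by norm_num)]
            exact ENNReal.ofReal_le_ofReal (le_of_eq (by ring))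
          calc EMetric.diam (closedBall (b : ℝ) (4 * ρ k (b : ℝ))) ^ s
              ≤ ENNReal.ofReal (8 * ρ k (b : ℝ)) ^ s := ENNReal.rpow_le_rpow hd hs.le
            _ = ENNReal.ofReal ((8 * ρ k (b : ℝ)) ^ s) :=
                ENNReal.ofReal_rpow_of_pos (by positivity)
            _ = ENNReal.ofReal ((8:ℝ) ^ s * ρ k (b : ℝ) ^ s) := by
                rw [Real.mul_rpow (by norm_num) hb0.le]
            _ = ENNReal.ofReal ((8:ℝ) ^ s) * ENNReal.ofReal (ρ k (b : ℝ) ^ s) := by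
                rw [ENNReal.ofReal_mul (Real.rpow_nonneg (by norm_num) s)]
            _ ≤ ENNReal.ofReal ((8:ℝ) ^ s) * (ν (closedBall (b : ℝ) (ρ k (b : ℝ))) / t) := by
                gcongr
                rw [ENNReal.le_div_iff_mul_le (Or.inl htpos) (Or.inl httop), mul_comm]
                exact hν k b b.2
        calc (∑' b : u k, EMetric.diam (closedBall (b : ℝ) (4 * ρ k (b : ℝ))) ^ s)
            ≤ ∑' b : u k, ENNReal.ofReal ((8:ℝ) ^ s) *
              (ν (closedBall (b : ℝ) (ρ k (b : ℝ))) / t) := ENNReal.tsum_le_tsum step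
          _ = ENNReal.ofReal ((8:ℝ) ^ s) *
              ((∑' b : u k, ν (closedBall (b : ℝ) (ρ k (b : ℝ)))) / t) := by
              rw [ENNReal.tsum_mul_left]
              congr 1
              simp only [div_eq_mul_inv, ENNReal.tsum_mul_right]
          _ ≤ ENNReal.ofReal ((8:ℝ) ^ s) * (ν Set.univ / t) := by
              gcongr
              exact hsum k
          _ = ENNReal.ofReal ((8:ℝ) ^ s) * ν Set.univ / t := by
              rw [mul_div_assoc]
      have hcast : ((t : ℝ≥0∞)) = (n : ℝ≥0∞) + 1 := by rw [ht]; push_cast; ring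
      rw [← hcast]
      exact liminf_le_of_frequently_le (Frequently.of_forall bound) (by isBoundedDefault)
    · -- the mesh tends to 0
      have h1 : Tendsto (fun k : ℕ => (8:ℝ) / ((k:ℝ) + 1)) atTop (nhds 0) := by
        have h0 := (tendsto_const_div_atTop_nhds_zero_nat (8:ℝ)).comp (tendsto_add_atTop_nat 1)
        have heq : (fun k : ℕ => (8:ℝ) / ((k:ℝ) + 1)) =
            ((fun n : ℕ => (8:ℝ) / (n:ℝ)) ∘ fun a => a + 1) := by
          funext k; simp [Function.comp]
        rw [heq]; exact h0
      have h2 := (ENNReal.continuous_ofReal.tendsto 0).comp h1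
      simpa [Function.comp_def] using h2
    · -- diameters are small
      refine Eventually.of_forall fun k => fun b => ?_
      have hb0 : 0 < ρ k (b : ℝ) := (hρ k b b.2).1
      have hbδ : ρ k (b : ℝ) ≤ 1 / (k + 1) := (hρ k b b.2).2
      rw [← Metric.emetric_closedBall (by positivity : (0:ℝ) ≤ 4 * _)]
      refine EMetric.diam_closedBall.trans ?_
      rw [← ENNReal.ofReal_ofNat, ← ENNReal.ofReal_mul (by norm_num)]
      apply ENNReal.ofReal_le_ofReal
      calc 2 * (4 * ρ k ↑b) = 8 * ρ k ↑b := by ring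
        _ ≤ 8 * (1 / (↑k + 1)) := mul_le_mul_of_nonneg_left hbδ (by norm_num)
        _ = 8 / (↑k + 1) := by ring
    · -- covering
      exact Eventually.of_forall fun k => fun a ha => by simpa using hcov k ha
  -- conclude: μH[s] A ≤ C / (n+1) for all n, with C < ∞, so it is zero
  by_contra hA
  have hC : ENNReal.ofReal ((8:ℝ) ^ s) * ν Set.univ ≠ ⊤ :=
    ENNReal.mul_ne_top ENNReal.ofReal_ne_top (measure_ne_top ν _)
  have h0 : (0:ℝ≥0∞) < μH[s] A := pos_iff_ne_zero.2 hA
  obtain ⟨ε, hε0, hεA⟩ := exists_between h0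
  have hεne : ε ≠ 0 := hε0.ne'
  have hεtop : ε ≠ ⊤ := (hεA.trans_le le_top).ne
  have hfrac : ENNReal.ofReal ((8:ℝ) ^ s) * ν Set.univ / ε ≠ ⊤ :=
    (ENNReal.div_lt_top hC hεne).ne
  obtain ⟨m, hm⟩ := ENNReal.exists_nat_gt hfrac
  have h1 : μH[s] A ≤ ENNReal.ofReal ((8:ℝ) ^ s) * ν Set.univ / ((m:ℝ≥0∞) + 1) := main m
  have h2 : ENNReal.ofReal ((8:ℝ) ^ s) * ν Set.univ / ((m:ℝ≥0∞) + 1) < ε := by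
    rw [ENNReal.div_lt_iff (Or.inl (lt_of_lt_of_le one_pos le_add_self).ne')
      (Or.inl (ENNReal.add_ne_top.2 ⟨ENNReal.natCast_ne_top m, ENNReal.one_ne_top⟩))]
    have hlt : ENNReal.ofReal ((8:ℝ) ^ s) * ν Set.univ < (m:ℝ≥0∞) * ε :=
      (ENNReal.div_lt_iff (Or.inl hεne) (Or.inl hεtop)).1 hm
    refine hlt.trans_le ?_
    rw [mul_comm ε]
    gcongr
    exact le_self_add
  exact absurd (h1.trans_lt h2) (not_lt.2 hεA.le)

/-- Rogers–Taylor density argument (vanishing direction): if the upper `s`-density of `ν`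
is infinite at `ν`-almost every point of `E`, and `H^s|_E ≪ ν`, then `H^s(E) = 0`. -/
theorem stmt11 (ν : Measure ℝ) [IsFiniteMeasure ν] (s : ℝ) (hs : 0 < s)
    (E : Set ℝ) (hE : MeasurableSet E)
    (hdens : ∀ᵐ a ∂ν, a ∈ E →
      Filter.limsup (fun r : ℝ => ν (Metric.closedBall a r) / ENNReal.ofReal (r ^ s))
        (nhdsWithin 0 (Set.Ioi 0)) = ⊤)
    (habs : ∀ H ⊆ E, MeasurableSet H → ν H = 0 → μH[s] H = 0) :
    μH[s] E = 0 := by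
  rw [Filter.eventually_iff, mem_ae_iff] at hdens
  obtain ⟨Z, hZsub, hZmeas, hZnull⟩ := exists_measurable_superset_of_null hdens
  have h1 : μH[s] (E ∩ Z) = 0 :=
    habs (E ∩ Z) Set.inter_subset_left (hE.inter hZmeas)
      (le_antisymm ((measure_mono Set.inter_subset_right).trans hZnull.le) zero_le)
  have h2 : μH[s] (E \ Z) = 0 := by
    apply stmt11_key ν s hs
    intro a ha
    have haZ : a ∉ Z := ha.2
    have hgood : a ∈ {a | a ∈ E → Filter.limsup
        (fun r : ℝ => ν (Metric.closedBall a r) / ENNReal.ofReal (r ^ s))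
        (nhdsWithin 0 (Set.Ioi 0)) = ⊤} := by
      by_contra hbad
      exact haZ (hZsub hbad)
    exact hgood ha.1
  refine le_antisymm ?_ zero_le
  calc μH[s] E ≤ μH[s] (E ∩ Z) + μH[s] (E \ Z) := by
        conv_lhs => rw [← Set.inter_union_diff E Z]
        exact measure_union_le _ _
    _ = 0 := by rw [h1, h2, add_zero]
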